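/- (Lemma 2.) Let the bias b_ℓ = 0 and the learning rate r_ℓ > 0. Fix a word b ∈ W with (b,b) ∉ P, and an index j. Let Δ⁺_b[j] = α·Σ_{a:(a,b)∈P} (1 − B(a)_j)·(2·B(b)_j − 1) be the gradient of the positive sub-loss L_{·,b}(B) = α·Σ_{a:(a,b)∈P} ℓ(B(a),B(b)) with respect to bit j of B(b). If the flip probability max(0, ½·tanh(2·r_ℓ·Δ⁺_b[j])) is strictly positive, then flipping bit j of B(b) strictly decreases this sub-loss: L_{·,b}(B^{(b,j)}) = L_{·,b}(B) − Δ⁺_b[j] < L_{·,b}(B); moreover necessarily B(b)_j = 1. -/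

import Mathlib

/-- Flip bit `j` of the binary vector `a`. -/
def flipBit {d : ℕ} (a : Fin d → Fin 2) (j : Fin d) : Fin d → Fin 2 :=
  Function.update a j (1 - a j)

/-- Positive violation count: number of indices `k` with `a k = 0` and `b k = 1`. -/
def posViol {d : ℕ} (a b : Fin d → Fin 2) : ℕ :=
  (Finset.univ.filter (fun k => a k = 0 ∧ b k = 1)).card

/-- A bit interpreted as a real number. -/
def bitR {d : ℕ} (a : Fin d → Fin 2) (j : Fin d) : ℝ := ((a j : ℕ) : ℝ)

/-- The positive sub-loss associated with pairs whose second component is `b`. -/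
noncomputable def subLossSnd {W : Type*} [DecidableEq W] {d : ℕ} (α : ℝ)
    (P : Finset (W × W)) (B : W → Fin d → Fin 2) (b : W) : ℝ :=
  α * ∑ p ∈ P.filter (fun p => p.2 = b), (posViol (B p.1) (B p.2) : ℝ)

/-- The gradient of the positive sub-loss with respect to bit `j` of `B b`. -/
noncomputable def gradPosSnd {W : Type*} [DecidableEq W] {d : ℕ} (α : ℝ)
    (P : Finset (W × W)) (B : W → Fin d → Fin 2) (b : W) (j : Fin d) : ℝ :=
  α * ∑ p ∈ P.filter (fun p => p.2 = b), (1 - bitR (B p.1) j) * (2 * bitR (B b) j - 1)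

lemma tanh_pos_imp {x : ℝ} (h : 0 < Real.tanh x) : 0 < x := by
  rw [Real.tanh_eq_sinh_div_cosh] at h
  have hc := Real.cosh_pos x
  have hs : 0 < Real.sinh x := by
    rcases div_pos_iff.mp h with ⟨h1, _⟩ | ⟨_, h2⟩
    · exact h1
    · linarith
  exact Real.sinh_pos_iff.mp hs

lemma posViol_flip {d : ℕ} (a c : Fin d → Fin 2) (j : Fin d) (hc : c j = 1) :
    (posViol a (flipBit c j) : ℝ) = (posViol a c : ℝ) - (1 - bitR a j) := by
  classical
  set S := Finset.univ.filter (fun k => a k = 0 ∧ c k = 1) with hS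
  have hnew : (Finset.univ.filter (fun k => a k = 0 ∧ flipBit c j k = 1)) = S.erase j := by
    ext k
    by_cases hk : k = j
    · subst hk; simp [flipBit, hc]
    · simp [flipBit, Function.update, hk, hS]
  have ha2 : a j = 0 ∨ a j = 1 := by omega
  rcases ha2 with h0 | h1
  · have hj : j ∈ S := by simp [hS, h0, hc]
    have hcard : (S.erase j).card = S.card - 1 := Finset.card_erase_of_mem hj
    have hpos : 1 ≤ S.card := Finset.card_pos.mpr ⟨j, hj⟩
    simp only [posViol, hnew, ← hS, hcard, bitR, h0]
    push_cast [Nat.cast_sub hpos]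
    norm_num
  · have hj : j ∉ S := by simp [hS, h1]
    have : S.erase j = S := Finset.erase_eq_of_notMem hj
    simp [posViol, hnew, ← hS, this, bitR, h1]

/-- Lemma 2: if the flip probability of bit `j` of `B b` is strictly positive (with zero
bias), then flipping that bit strictly decreases the positive sub-loss associated with `b`. -/
theorem flip_decreases_subLossSnd {W : Type*} [DecidableEq W] {d : ℕ}
    (α rℓ : ℝ) (hα : 0 < α) (hr : 0 < rℓ) (P : Finset (W × W))
    (B : W → Fin d → Fin 2) (b : W) (hb : (b, b) ∉ P) (j : Fin d)
    (hprob : 0 < max 0 (1 / 2 * Real.tanh (2 * (rℓ * gradPosSnd α P B b j)))) :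
    subLossSnd α P (Function.update B b (flipBit (B b) j)) b
        = subLossSnd α P B b - gradPosSnd α P B b j ∧
    subLossSnd α P (Function.update B b (flipBit (B b) j)) b < subLossSnd α P B b ∧
    B b j = 1 := by
  classical
  -- Step 1: positive gradient
  have hx : 0 < 1 / 2 * Real.tanh (2 * (rℓ * gradPosSnd α P B b j)) := by
    rcases lt_max_iff.mp hprob with h | h
    · linarith
    · exact h
  have htanh : 0 < Real.tanh (2 * (rℓ * gradPosSnd α P B b j)) := by linarith
  have hgrad : 0 < gradPosSnd α P B b j := by
    have := tanh_pos_imp htanh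
    nlinarith
  -- Step 2: B b j = 1
  have hbj : B b j = 1 := by
    by_contra h
    have h0 : B b j = 0 := by omega
    have hsum : ∑ p ∈ P.filter (fun p => p.2 = b),
        (1 - bitR (B p.1) j) * (2 * bitR (B b) j - 1) ≤ 0 := by
      apply Finset.sum_nonpos
      intro p _
      have h1 : bitR (B p.1) j ≤ 1 := by
        have : (B p.1 j : ℕ) ≤ 1 := Nat.lt_succ_iff.mp (B p.1 j).is_lt
        simpa [bitR] using (Nat.cast_le (α := ℝ)).mpr this
      have h2 : bitR (B b) j = 0 := by simp [bitR, h0]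
      nlinarith
    have : gradPosSnd α P B b j ≤ 0 := by
      unfold gradPosSnd
      exact mul_nonpos_of_nonneg_of_nonpos hα.le hsum
    linarith
  -- Step 3: the equality
  have heq : subLossSnd α P (Function.update B b (flipBit (B b) j)) b
      = subLossSnd α P B b - gradPosSnd α P B b j := by
    unfold subLossSnd gradPosSnd
    rw [← mul_sub, ← Finset.sum_sub_distrib]
    congr 1
    apply Finset.sum_congr rfl
    intro p hp
    rw [Finset.mem_filter] at hp
    obtain ⟨hpP, hp2⟩ := hp
    have hp1 : p.1 ≠ b := by
      intro h
      apply hb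
      have : p = (b, b) := Prod.ext h hp2
      rwa [this] at hpP
    rw [Function.update_of_ne hp1, hp2, Function.update_self,
      posViol_flip (B p.1) (B b) j hbj]
    have : bitR (B b) j = 1 := by simp [bitR, hbj]
    rw [this]
    ring
  refine ⟨heq, ?_, hbj⟩
  rw [heq]
  linarith
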